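/- arXiv:2111.01643 — 2 statements merged into one kernel-verified Lean document; each statement's English description precedes it below -/
import Mathlib

section
/- The form B is a pre-inner product on H₁ × H₂: it is additive and complex-linear in the second argument, conjugate-linear in the first argument, Hermitian in the sense that B(y,x) is the complex conjugate of B(x,y) for all x, y ∈ H₁ × H₂, and positive semi-definite in the sense that for every x ∈ H₁ × H₂ the value B(x,x) is a real number with B(x,x) ≥ 0. -/
open scoped InnerProductSpace ComplexConjugate

noncomputable section

variable {H₁ H₂ : Type*}
  [NormedAddCommGroup H₁] [InnerProductSpace ℂ H₁]
  [NormedAddCommGroup H₂] [InnerProductSpace ℂ H₂]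

/-- The pre-inner product `B` on `H₁ × H₂` of the minimally glued one-particle structure. -/
def gluedForm (O₁ : Submodule ℂ H₁) (O₂ : Submodule ℂ H₂)
    [O₁.HasOrthogonalProjection] [O₂.HasOrthogonalProjection]
    (U : O₁ ≃ₗᵢ[ℂ] O₂) (x y : H₁ × H₂) : ℂ :=
  ⟪x.1, y.1⟫_ℂ + ⟪x.2, y.2⟫_ℂ
    + ⟪x.1, (U.symm (O₂.orthogonalProjectionOnto y.2) : H₁)⟫_ℂ
    + ⟪x.2, (U (O₁.orthogonalProjectionOnto y.1) : H₂)⟫_ℂ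

lemma gluedForm_key (O₁ : Submodule ℂ H₁) (O₂ : Submodule ℂ H₂)
    [O₁.HasOrthogonalProjection] [O₂.HasOrthogonalProjection]
    (U : O₁ ≃ₗᵢ[ℂ] O₂) (a : H₁) (b : H₂) :
    ⟪a, (U.symm (O₂.orthogonalProjectionOnto b) : H₁)⟫_ℂ
      = ⟪(U (O₁.orthogonalProjectionOnto a) : H₂), b⟫_ℂ := by
  calc ⟪a, (U.symm (O₂.orthogonalProjectionOnto b) : H₁)⟫_ℂ
      = (starRingEnd ℂ) ⟪(U.symm (O₂.orthogonalProjectionOnto b) : H₁), a⟫_ℂ :=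
        (inner_conj_symm _ _).symm
    _ = (starRingEnd ℂ) ⟪U.symm (O₂.orthogonalProjectionOnto b), O₁.orthogonalProjectionOnto a⟫_ℂ := by
        rw [Submodule.inner_orthogonalProjectionOnto_eq_of_mem_left]
    _ = ⟪O₁.orthogonalProjectionOnto a, U.symm (O₂.orthogonalProjectionOnto b)⟫_ℂ :=
        inner_conj_symm _ _
    _ = ⟪U (O₁.orthogonalProjectionOnto a), U (U.symm (O₂.orthogonalProjectionOnto b))⟫_ℂ :=
        (U.inner_map_map _ _).symm
    _ = ⟪U (O₁.orthogonalProjectionOnto a), O₂.orthogonalProjectionOnto b⟫_ℂ := by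
        rw [U.apply_symm_apply]
    _ = ⟪(U (O₁.orthogonalProjectionOnto a) : H₂), b⟫_ℂ :=
        Submodule.inner_orthogonalProjectionOnto_eq_of_mem_left _ _

/-- `B` is additive and complex-linear in the second argument, conjugate-linear in the
first argument, Hermitian, and positive semi-definite: a pre-inner product on `H₁ × H₂`. -/
theorem gluedForm_is_pre_inner_product (O₁ : Submodule ℂ H₁) (O₂ : Submodule ℂ H₂)
    [O₁.HasOrthogonalProjection] [O₂.HasOrthogonalProjection]
    (U : O₁ ≃ₗᵢ[ℂ] O₂) :
    (∀ x y z : H₁ × H₂, gluedForm O₁ O₂ U x (y + z)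
        = gluedForm O₁ O₂ U x y + gluedForm O₁ O₂ U x z)
    ∧ (∀ (c : ℂ) (x y : H₁ × H₂), gluedForm O₁ O₂ U x (c • y) = c * gluedForm O₁ O₂ U x y)
    ∧ (∀ x y z : H₁ × H₂, gluedForm O₁ O₂ U (x + y) z
        = gluedForm O₁ O₂ U x z + gluedForm O₁ O₂ U y z)
    ∧ (∀ (c : ℂ) (x y : H₁ × H₂), gluedForm O₁ O₂ U (c • x) y
        = (starRingEnd ℂ) c * gluedForm O₁ O₂ U x y)
    ∧ (∀ x y : H₁ × H₂, gluedForm O₁ O₂ U y x = (starRingEnd ℂ) (gluedForm O₁ O₂ U x y))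
    ∧ (∀ x : H₁ × H₂, (gluedForm O₁ O₂ U x x).im = 0 ∧ 0 ≤ (gluedForm O₁ O₂ U x x).re) := by
  -- rewrite gluedForm in a symmetric shape
  have hform : ∀ x y : H₁ × H₂, gluedForm O₁ O₂ U x y
      = ⟪x.1, y.1⟫_ℂ + ⟪x.2, y.2⟫_ℂ
        + ⟪(U (O₁.orthogonalProjectionOnto x.1) : H₂), y.2⟫_ℂ
        + ⟪x.2, (U (O₁.orthogonalProjectionOnto y.1) : H₂)⟫_ℂ := by
    intro x y
    rw [gluedForm, gluedForm_key]
  refine ⟨?_, ?_, ?_, ?_, ?_, ?_⟩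
  · intro x y z
    simp only [gluedForm, Prod.fst_add, Prod.snd_add, map_add, Submodule.coe_add,
      inner_add_right]
    ring
  · intro c x y
    simp only [gluedForm, Prod.smul_fst, Prod.smul_snd, map_smul, Submodule.coe_smul,
      inner_smul_right]
    ring
  · intro x y z
    simp only [gluedForm, Prod.fst_add, Prod.snd_add, inner_add_left]
    ring
  · intro c x y
    simp only [gluedForm, Prod.smul_fst, Prod.smul_snd, inner_smul_left]
    ring
  · intro x y
    rw [hform, hform, map_add, map_add, map_add, ← inner_conj_symm x.1 y.1,
      ← inner_conj_symm x.2 y.2, ← inner_conj_symm ((U (O₁.orthogonalProjectionOnto x.1) : H₂)) y.2,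
      ← inner_conj_symm x.2 ((U (O₁.orthogonalProjectionOnto y.1) : H₂))]
    simp only [inner_conj_symm]
    ring
  · intro x
    have h := hform x x
    set w : H₂ := (U (O₁.orthogonalProjectionOnto x.1) : H₂) with hw
    set z : ℂ := ⟪x.2, w⟫_ℂ with hz
    have hconj : ⟪w, x.2⟫_ℂ = (starRingEnd ℂ) z := (inner_conj_symm w x.2).symm
    have r1 : (⟪x.1, x.1⟫_ℂ).re = ‖x.1‖ ^ 2 := by
      rw [← RCLike.re_to_complex]; exact inner_self_eq_norm_sq _
    have r2 : (⟪x.2, x.2⟫_ℂ).re = ‖x.2‖ ^ 2 := by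
      rw [← RCLike.re_to_complex]; exact inner_self_eq_norm_sq _
    have i1 : (⟪x.1, x.1⟫_ℂ).im = 0 := by
      rw [← RCLike.im_to_complex]; exact inner_self_im _
    have i2 : (⟪x.2, x.2⟫_ℂ).im = 0 := by
      rw [← RCLike.im_to_complex]; exact inner_self_im _
    have hre : (gluedForm O₁ O₂ U x x).re = ‖x.1‖ ^ 2 + ‖x.2‖ ^ 2 + 2 * z.re := by
      rw [h, hconj]
      simp only [Complex.add_re, Complex.conj_re, r1, r2]
      ring
    have him : (gluedForm O₁ O₂ U x x).im = 0 := by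
      rw [h, hconj]
      simp only [Complex.add_im, Complex.conj_im, i1, i2]
      ring
    refine ⟨him, ?_⟩
    have hwn : ‖w‖ ≤ ‖x.1‖ := by
      have h0 : ‖w‖ = ‖O₁.orthogonalProjectionOnto x.1‖ := by
        rw [hw, Submodule.norm_coe, U.norm_map]
      rw [h0]
      calc ‖O₁.orthogonalProjectionOnto x.1‖ ≤ ‖O₁.orthogonalProjectionOnto‖ * ‖x.1‖ :=
            (O₁.orthogonalProjectionOnto).le_opNorm x.1
        _ ≤ 1 * ‖x.1‖ :=
            mul_le_mul_of_nonneg_right (Submodule.orthogonalProjectionOnto_norm_le O₁) (norm_nonneg _)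
        _ = ‖x.1‖ := one_mul _
    have hb : |z.re| ≤ ‖x.2‖ * ‖w‖ :=
      (Complex.abs_re_le_norm z).trans (by exact norm_inner_le_norm _ _)
    have hb' := abs_le.mp hb
    rw [hre]
    nlinarith [norm_nonneg x.1, norm_nonneg x.2, norm_nonneg w, hb'.1, hwn,
      sq_nonneg (‖x.1‖ - ‖x.2‖), mul_le_mul_of_nonneg_left hwn (norm_nonneg x.2)]

end
end

section
/- Density of the glued one-particle structure: assume in addition that the closure of K₁(V₁) + i·K₁(V₁) equals H₁ and the closure of K₂(V₂) + i·K₂(V₂) equals H₂. Then the complex-linear span of the set { Φ(K₁f₁, K₂f₂) : f₁ ∈ V₁, f₂ ∈ V₂ } is dense in O₁ᗮ × O₂ᗮ × O₂ (where Oᵢᗮ is the orthogonal complement of Oᵢ in Hᵢ), i.e. K̃(V₁+V₂) + i·K̃(V₁+V₂) is dense in the glued Hilbert space. -/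
open scoped InnerProductSpace ComplexConjugate
noncomputable section
variable {H₁ H₂ : Type*}
  [NormedAddCommGroup H₁] [InnerProductSpace ℂ H₁]
  [NormedAddCommGroup H₂] [InnerProductSpace ℂ H₂]

def gluedMap (O₁ : Submodule ℂ H₁) (O₂ : Submodule ℂ H₂)
    [O₁.HasOrthogonalProjection] [O₂.HasOrthogonalProjection]
    (U : O₁ ≃ₗᵢ[ℂ] O₂) (x : H₁ × H₂) : H₁ × H₂ × H₂ :=
  (x.1 - (O₁.orthogonalProjectionOnto x.1 : H₁),
   x.2 - (O₂.orthogonalProjectionOnto x.2 : H₂),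
   (U (O₁.orthogonalProjectionOnto x.1) : H₂) + (O₂.orthogonalProjectionOnto x.2 : H₂))

lemma gluedMap_add (O₁ : Submodule ℂ H₁) (O₂ : Submodule ℂ H₂)
    [O₁.HasOrthogonalProjection] [O₂.HasOrthogonalProjection]
    (U : O₁ ≃ₗᵢ[ℂ] O₂) (x y : H₁ × H₂) :
    gluedMap O₁ O₂ U (x + y) = gluedMap O₁ O₂ U x + gluedMap O₁ O₂ U y := by
  simp only [gluedMap, Prod.fst_add, Prod.snd_add, map_add, Submodule.coe_add, Prod.mk_add_mk]
  refine Prod.ext ?_ (Prod.ext ?_ ?_) <;> simp <;> abel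

lemma gluedMap_smul (O₁ : Submodule ℂ H₁) (O₂ : Submodule ℂ H₂)
    [O₁.HasOrthogonalProjection] [O₂.HasOrthogonalProjection]
    (U : O₁ ≃ₗᵢ[ℂ] O₂) (c : ℂ) (x : H₁ × H₂) :
    gluedMap O₁ O₂ U (c • x) = c • gluedMap O₁ O₂ U x := by
  simp only [gluedMap, Prod.smul_fst, Prod.smul_snd, map_smul, Submodule.coe_smul,
    Prod.smul_mk, smul_sub, smul_add]

lemma gluedMap_continuous (O₁ : Submodule ℂ H₁) (O₂ : Submodule ℂ H₂)
    [O₁.HasOrthogonalProjection] [O₂.HasOrthogonalProjection]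
    (U : O₁ ≃ₗᵢ[ℂ] O₂) : Continuous (gluedMap O₁ O₂ U) := by
  have c1 : Continuous fun x : H₁ × H₂ => ((O₁.orthogonalProjectionOnto x.1 : O₁) : H₁) :=
    continuous_subtype_val.comp ((O₁.orthogonalProjectionOnto).continuous.comp continuous_fst)
  have c2 : Continuous fun x : H₁ × H₂ => ((O₂.orthogonalProjectionOnto x.2 : O₂) : H₂) :=
    continuous_subtype_val.comp ((O₂.orthogonalProjectionOnto).continuous.comp continuous_snd)
  have c3 : Continuous fun x : H₁ × H₂ => ((U (O₁.orthogonalProjectionOnto x.1) : O₂) : H₂) :=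
    continuous_subtype_val.comp
      (U.continuous.comp ((O₁.orthogonalProjectionOnto).continuous.comp continuous_fst))
  exact ((continuous_fst.sub c1).prodMk ((continuous_snd.sub c2).prodMk (c3.add c2)))

/-- Density of the glued one-particle structure: if `K₁(V₁) + i·K₁(V₁)` is dense in `H₁` and
`K₂(V₂) + i·K₂(V₂)` is dense in `H₂`, then the complex-linear span of
`{Φ(K₁f₁, K₂f₂) : f₁ ∈ V₁, f₂ ∈ V₂}` is dense in `O₁ᗮ × O₂ᗮ × O₂`, i.e.
`K̃(V₁+V₂) + i·K̃(V₁+V₂)` is dense in the glued Hilbert space. -/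
theorem gluedMap_dense_range (O₁ : Submodule ℂ H₁) (O₂ : Submodule ℂ H₂)
    [O₁.HasOrthogonalProjection] [O₂.HasOrthogonalProjection]
    (U : O₁ ≃ₗᵢ[ℂ] O₂)
    {V : Type*} [AddCommGroup V] [Module ℝ V] (V₁ V₂ : Submodule ℝ V)
    (K₁ : V₁ →ₗ[ℝ] H₁) (K₂ : V₂ →ₗ[ℝ] H₂)
    (hcompat : ∀ (f : V) (h₁ : f ∈ V₁) (h₂ : f ∈ V₂),
      ∃ hm : K₁ ⟨f, h₁⟩ ∈ O₁, (U ⟨K₁ ⟨f, h₁⟩, hm⟩ : H₂) = K₂ ⟨f, h₂⟩)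
    (hd₁ : closure {x : H₁ | ∃ f g : V₁, x = K₁ f + Complex.I • K₁ g} = Set.univ)
    (hd₂ : closure {x : H₂ | ∃ f g : V₂, x = K₂ f + Complex.I • K₂ g} = Set.univ) :
    closure (Submodule.span ℂ
        {z : H₁ × H₂ × H₂ | ∃ (f₁ : V₁) (f₂ : V₂), z = gluedMap O₁ O₂ U (K₁ f₁, K₂ f₂)}
        : Set (H₁ × H₂ × H₂))
      = {z : H₁ × H₂ × H₂ | z.1 ∈ O₁ᗮ ∧ z.2.1 ∈ O₂ᗮ ∧ z.2.2 ∈ O₂} := by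
  set S := {z : H₁ × H₂ × H₂ | ∃ (f₁ : V₁) (f₂ : V₂), z = gluedMap O₁ O₂ U (K₁ f₁, K₂ f₂)}
  set T : Submodule ℂ (H₁ × H₂ × H₂) := O₁ᗮ.prod ((O₂ᗮ).prod O₂) with hT
  have hTset : {z : H₁ × H₂ × H₂ | z.1 ∈ O₁ᗮ ∧ z.2.1 ∈ O₂ᗮ ∧ z.2.2 ∈ O₂} = (T : Set _) := by
    ext z; simp [hT, Submodule.mem_prod]
  rw [hTset]
  have hO₂closed : IsClosed (O₂ : Set H₂) := by
    rw [← Submodule.orthogonal_orthogonal O₂]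
    exact Submodule.isClosed_orthogonal _
  have hTclosed : IsClosed (T : Set (H₁ × H₂ × H₂)) := by
    have : (T : Set (H₁ × H₂ × H₂)) = (O₁ᗮ : Set H₁) ×ˢ ((O₂ᗮ : Set H₂) ×ˢ (O₂ : Set H₂)) := by
      ext z; simp [hT, Submodule.mem_prod, Set.mem_prod]
    rw [this]
    exact (Submodule.isClosed_orthogonal _).prod
      ((Submodule.isClosed_orthogonal _).prod hO₂closed)
  apply Set.Subset.antisymm
  · -- closure span ⊆ T
    refine closure_minimal ?_ hTclosed
    refine (Submodule.span_le.mpr ?_ : Submodule.span ℂ S ≤ T)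
    rintro z ⟨f₁, f₂, rfl⟩
    refine ⟨Submodule.sub_starProjection_mem_orthogonal _, Submodule.sub_starProjection_mem_orthogonal _,
      O₂.add_mem (U _).2 (O₂.orthogonalProjectionOnto (K₂ f₂)).2⟩
  · -- T ⊆ closure span
    intro z hz
    obtain ⟨ha, hb, hc⟩ : z.1 ∈ O₁ᗮ ∧ z.2.1 ∈ O₂ᗮ ∧ z.2.2 ∈ O₂ := by
      simpa [hT, Submodule.mem_prod] using hz
    set ψ : H₁ × H₂ := (z.1 + (U.symm ⟨z.2.2, hc⟩ : H₁), z.2.1) with hψ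
    have hp1 : O₁.orthogonalProjectionOnto ψ.1 = U.symm ⟨z.2.2, hc⟩ := by
      rw [hψ, map_add, Submodule.orthogonalProjectionOnto_apply_of_mem_orthogonal ha,
        Submodule.orthogonalProjectionOnto_mem_subspace_eq_self, zero_add]
    have hp2 : O₂.orthogonalProjectionOnto ψ.2 = 0 :=
      Submodule.orthogonalProjectionOnto_apply_of_mem_orthogonal hb
    have him : gluedMap O₁ O₂ U ψ = z := by
      refine Prod.ext ?_ (Prod.ext ?_ ?_)
      · simp [gluedMap, hp1]; simp [hψ]
      · simp [gluedMap, hp2]; simp [hψ]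
      · simp [gluedMap, hp1, hp2]
    -- density: ψ ∈ closure (D₁ ×ˢ D₂)
    set D₁ := {x : H₁ | ∃ f g : V₁, x = K₁ f + Complex.I • K₁ g}
    set D₂ := {x : H₂ | ∃ f g : V₂, x = K₂ f + Complex.I • K₂ g}
    have hDdense : closure (D₁ ×ˢ D₂) = Set.univ := by
      rw [closure_prod_eq, hd₁, hd₂, Set.univ_prod_univ]
    have hψmem : ψ ∈ closure (D₁ ×ˢ D₂) := by rw [hDdense]; trivial
    have himg : gluedMap O₁ O₂ U '' (D₁ ×ˢ D₂) ⊆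
        (Submodule.span ℂ S : Set (H₁ × H₂ × H₂)) := by
      rintro - ⟨x, ⟨⟨f, g, hx1⟩, ⟨f', g', hx2⟩⟩, rfl⟩
      have hx : x = (K₁ f, K₂ f') + Complex.I • (K₁ g, K₂ g') := by
        rw [Prod.ext_iff]; exact ⟨hx1, hx2⟩
      rw [hx, gluedMap_add, gluedMap_smul]
      exact Submodule.add_mem _ (Submodule.subset_span ⟨f, f', rfl⟩)
        (Submodule.smul_mem _ _ (Submodule.subset_span ⟨g, g', rfl⟩))
    have : z ∈ closure (gluedMap O₁ O₂ U '' (D₁ ×ˢ D₂)) := by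
      rw [← him]
      exact (image_closure_subset_closure_image (gluedMap_continuous O₁ O₂ U))
        (Set.mem_image_of_mem _ hψmem)
    exact closure_mono himg this

end
end
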